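/- Let β₁, β₂, β₃, β₄ ≥ 0 with β₃ = β₄, let θ ∈ [0, 2π), let Q = Q(θ) be the rotation of ℝ² with matrix ((cos θ, −sin θ), (sin θ, cos θ)), let w : ℝ² → ℝ² and let x ∈ ℝ² be such that w is differentiable at Q x. Then, with w̌(y) = Qᵀ w(Q y), one has β₁·curl(w̌)(x)² + β₂·div(w̌)(x)² + β₃·sh₁(w̌)(x)² + β₄·sh₂(w̌)(x)² = β₁·curl(w)(Q x)² + β₂·div(w)(Q x)² + β₃·sh₁(w)(Q x)² + β₄·sh₂(w)(Q x)². -/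

import Mathlib

/-- Rotation of `ℝ²` by angle `θ`, with matrix `((cos θ, −sin θ), (sin θ, cos θ))`. -/
noncomputable def rotQ (θ : ℝ) (p : ℝ × ℝ) : ℝ × ℝ :=
  (Real.cos θ * p.1 - Real.sin θ * p.2, Real.sin θ * p.1 + Real.cos θ * p.2)

/-- Transpose (inverse) of the rotation `rotQ θ`. -/
noncomputable def rotQT (θ : ℝ) (p : ℝ × ℝ) : ℝ × ℝ :=
  (Real.cos θ * p.1 + Real.sin θ * p.2, -Real.sin θ * p.1 + Real.cos θ * p.2)

/-- `curl(w)(x) = ∂w₂/∂x₁ − ∂w₁/∂x₂` via the Fréchet derivative. -/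
noncomputable def curlOp (w : ℝ × ℝ → ℝ × ℝ) (x : ℝ × ℝ) : ℝ :=
  (fderiv ℝ w x (1, 0)).2 - (fderiv ℝ w x (0, 1)).1

/-- `div(w)(x) = ∂w₁/∂x₁ + ∂w₂/∂x₂` via the Fréchet derivative. -/
noncomputable def divOp (w : ℝ × ℝ → ℝ × ℝ) (x : ℝ × ℝ) : ℝ :=
  (fderiv ℝ w x (1, 0)).1 + (fderiv ℝ w x (0, 1)).2

/-- `sh₁(w)(x) = ∂w₂/∂x₂ − ∂w₁/∂x₁` via the Fréchet derivative. -/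
noncomputable def sh1Op (w : ℝ × ℝ → ℝ × ℝ) (x : ℝ × ℝ) : ℝ :=
  (fderiv ℝ w x (0, 1)).2 - (fderiv ℝ w x (1, 0)).1

/-- `sh₂(w)(x) = ∂w₁/∂x₂ + ∂w₂/∂x₁` via the Fréchet derivative. -/
noncomputable def sh2Op (w : ℝ × ℝ → ℝ × ℝ) (x : ℝ × ℝ) : ℝ :=
  (fderiv ℝ w x (0, 1)).1 + (fderiv ℝ w x (1, 0)).2

noncomputable def rotCLM (θ : ℝ) : (ℝ × ℝ) →L[ℝ] (ℝ × ℝ) :=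
  ((Real.cos θ • ContinuousLinearMap.fst ℝ ℝ ℝ - Real.sin θ • ContinuousLinearMap.snd ℝ ℝ ℝ).prod
   (Real.sin θ • ContinuousLinearMap.fst ℝ ℝ ℝ + Real.cos θ • ContinuousLinearMap.snd ℝ ℝ ℝ))

noncomputable def rotTCLM (θ : ℝ) : (ℝ × ℝ) →L[ℝ] (ℝ × ℝ) :=
  ((Real.cos θ • ContinuousLinearMap.fst ℝ ℝ ℝ + Real.sin θ • ContinuousLinearMap.snd ℝ ℝ ℝ).prod
   ((-Real.sin θ) • ContinuousLinearMap.fst ℝ ℝ ℝ + Real.cos θ • ContinuousLinearMap.snd ℝ ℝ ℝ))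

lemma rotCLM_apply (θ : ℝ) (p : ℝ × ℝ) : rotCLM θ p = rotQ θ p := by
  simp [rotCLM, rotQ, smul_eq_mul]

lemma rotTCLM_apply (θ : ℝ) (p : ℝ × ℝ) : rotTCLM θ p = rotQT θ p := by
  simp [rotTCLM, rotQT, smul_eq_mul]

lemma key (θ : ℝ) (w : ℝ × ℝ → ℝ × ℝ) (x : ℝ × ℝ)
    (hw : DifferentiableAt ℝ w (rotQ θ x)) (v : ℝ × ℝ) :
    fderiv ℝ (fun y => rotQT θ (w (rotQ θ y))) x v =
      rotQT θ (fderiv ℝ w (rotQ θ x) (rotQ θ v)) := by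
  have h1 : HasFDerivAt (fun y => rotQT θ (w (rotQ θ y)))
      ((rotTCLM θ).comp ((fderiv ℝ w (rotQ θ x)).comp (rotCLM θ))) x := by
    have hQ : HasFDerivAt (rotQ θ) (rotCLM θ) x := by
      have := (rotCLM θ).hasFDerivAt (x := x)
      simpa [funext (rotCLM_apply θ)] using this
    have hw' : HasFDerivAt w (fderiv ℝ w (rotQ θ x)) (rotQ θ x) := hw.hasFDerivAt
    have hQT : HasFDerivAt (rotQT θ) (rotTCLM θ) (w (rotQ θ x)) := by
      have := (rotTCLM θ).hasFDerivAt (x := w (rotQ θ x))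
      simpa [funext (rotTCLM_apply θ)] using this
    exact hQT.comp x (hw'.comp x hQ)
  rw [h1.fderiv]
  simp [rotCLM_apply, rotTCLM_apply]

/-- For `β₁,…,β₄ ≥ 0` with `β₃ = β₄`, a rotation `Q = Q(θ)` and `w`
differentiable at `Q x`, the weighted sum of squared vector operators of the rotated
field `w̌(y) = Qᵀ w(Q y)` at `x` equals that of `w` at `Q x`. -/
theorem stmt10 (β₁ β₂ β₃ β₄ : ℝ) (hβ₁ : 0 ≤ β₁) (hβ₂ : 0 ≤ β₂) (hβ₃ : 0 ≤ β₃)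
    (hβ₄ : 0 ≤ β₄) (hβ : β₃ = β₄)
    (θ : ℝ) (hθ : θ ∈ Set.Ico 0 (2 * Real.pi)) (w : ℝ × ℝ → ℝ × ℝ) (x : ℝ × ℝ)
    (hw : DifferentiableAt ℝ w (rotQ θ x)) :
    β₁ * curlOp (fun y => rotQT θ (w (rotQ θ y))) x ^ 2 +
        β₂ * divOp (fun y => rotQT θ (w (rotQ θ y))) x ^ 2 +
        β₃ * sh1Op (fun y => rotQT θ (w (rotQ θ y))) x ^ 2 +
        β₄ * sh2Op (fun y => rotQT θ (w (rotQ θ y))) x ^ 2 =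
      β₁ * curlOp w (rotQ θ x) ^ 2 + β₂ * divOp w (rotQ θ x) ^ 2 +
        β₃ * sh1Op w (rotQ θ x) ^ 2 + β₄ * sh2Op w (rotQ θ x) ^ 2 := by
  subst hβ
  set L := fderiv ℝ w (rotQ θ x) with hL
  set s := Real.sin θ
  set c := Real.cos θ
  have hsc : s ^ 2 + c ^ 2 = 1 := Real.sin_sq_add_cos_sq θ
  have h10 : L (c, s) = c • L (1, 0) + s • L (0, 1) := by
    have : ((c, s) : ℝ × ℝ) = c • ((1 : ℝ), (0 : ℝ)) + s • ((0 : ℝ), (1 : ℝ)) := by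
      simp [Prod.ext_iff]
    rw [this, map_add, map_smul, map_smul]
  have h01 : L (-s, c) = (-s) • L (1, 0) + c • L (0, 1) := by
    have : ((-s, c) : ℝ × ℝ) = (-s) • ((1 : ℝ), (0 : ℝ)) + c • ((0 : ℝ), (1 : ℝ)) := by
      simp [Prod.ext_iff]
    rw [this, map_add, map_smul, map_smul]
  have k10 := key θ w x hw (1, 0)
  have k01 := key θ w x hw (0, 1)
  rw [show rotQ θ ((1 : ℝ), (0 : ℝ)) = (c, s) by simp [rotQ, c, s]] at k10
  rw [show rotQ θ ((0 : ℝ), (1 : ℝ)) = (-s, c) by simp [rotQ, c, s]] at k01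
  rw [← hL, h10] at k10
  rw [← hL, h01] at k01
  set a := (L (1, 0)).1
  set cc := (L (1, 0)).2
  set b := (L (0, 1)).1
  set d := (L (0, 1)).2
  have e10 : fderiv ℝ (fun y => rotQT θ (w (rotQ θ y))) x (1, 0) =
      (c * (c * a + s * b) + s * (c * cc + s * d),
       -s * (c * a + s * b) + c * (c * cc + s * d)) := by
    rw [k10]; simp [rotQT, Prod.smul_def, smul_eq_mul, c, s, a, cc, b, d]
  have e01 : fderiv ℝ (fun y => rotQT θ (w (rotQ θ y))) x (0, 1) =
      (c * (-s * a + c * b) + s * (-s * cc + c * d),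
       -s * (-s * a + c * b) + c * (-s * cc + c * d)) := by
    rw [k01]; simp [rotQT, Prod.smul_def, smul_eq_mul, c, s, a, cc, b, d]
  simp only [curlOp, divOp, sh1Op, sh2Op, e10, e01, ← hL]
  linear_combination ((s ^ 2 + c ^ 2 + 1) *
    (β₁ * (cc - b) ^ 2 + β₂ * (a + d) ^ 2 + β₃ * ((d - a) ^ 2 + (b + cc) ^ 2))) * hsc
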